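/- arXiv:1510.08044 — 15 statements merged into one kernel-verified Lean document; each statement's English description precedes it below -/
import Mathlib

section
/- If X is a pretopological space and F is a pretopologically open filter on X (i.e., F ∈ F implies inh F ∈ F), then the adherence of F with respect to the pretopology equals the adherence of F with respect to the partial regularization rπ. -/
open Set Filter

/-- A pretopological space: a vicinity filter at each point containing the point. -/
structure Pretop (X : Type*) where
  V : X → Filter X
  pure_le : ∀ x : X, (pure x : Filter X) ≤ V x

/-- Two filters meet (`F # G`). -/
def Meets {X : Type*} (F G : Filter X) : Prop :=
  ∀ A ∈ F, ∀ B ∈ G, (A ∩ B).Nonempty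

namespace Pretop

variable {X Y : Type*} (π : Pretop X)

/-- Convergence: `F → x` iff `F ⊇ V x`. -/
def Conv (F : Filter X) (x : X) : Prop := F ≤ π.V x

/-- Adherence of a filter. -/
def adh (F : Filter X) : Set X := {x | Meets (π.V x) F}

/-- Adherence of a set (adherence of its principal filter). -/
def adhS (A : Set X) : Set X := {x | ∀ U ∈ π.V x, (U ∩ A).Nonempty}

/-- Inherence of a set. -/
def inh (A : Set X) : Set X := (π.adhS Aᶜ)ᶜ

/-- A compact pretopological space: every proper filter has nonempty adherence. -/
def IsCompactPre : Prop := ∀ F : Filter X, F.NeBot → (π.adh F).Nonempty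

/-- Hausdorff: distinct points have disjoint vicinities. -/
def HausdorffPre : Prop :=
  ∀ x y : X, x ≠ y → ∃ U ∈ π.V x, ∃ W ∈ π.V y, U ∩ W = ∅

/-- `F` is compact at `A`: every filter meeting `F` has adherence meeting `A`. -/
def CompactAt (F : Filter X) (A : Set X) : Prop :=
  ∀ G : Filter X, Meets G F → (π.adh G ∩ A).Nonempty

/-- A cover of `A`: every point of `A` has a member of `C` as a vicinity. -/
def IsCover (C : Set (Set X)) (A : Set X) : Prop :=
  ∀ x ∈ A, ∃ U ∈ C, U ∈ π.V x

/-- Cover-compactness. -/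
def CoverCompact (A : Set X) : Prop :=
  ∀ C : Set (Set X), π.IsCover C A →
    ∃ D : Finset (Set X), ↑D ⊆ C ∧ A ⊆ π.inh (⋃ U ∈ D, U)

lemma mem_of_vicinity {x : X} {U : Set X} (h : U ∈ π.V x) : x ∈ U := π.pure_le x h

lemma subset_adhS (A : Set X) : A ⊆ π.adhS A :=
  fun x hx U hU => ⟨x, π.mem_of_vicinity hU, hx⟩

lemma adhS_mono {A B : Set X} (h : A ⊆ B) : π.adhS A ⊆ π.adhS B :=
  fun x hx U hU => (hx U hU).imp fun y hy => ⟨hy.1, h hy.2⟩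

lemma adhS_empty : π.adhS (∅ : Set X) = ∅ := by
  ext x
  simp only [adhS, mem_setOf_eq, Set.inter_empty, Set.mem_empty_iff_false, iff_false]
  intro h
  simpa using h univ univ_mem

lemma adhS_union (A B : Set X) : π.adhS (A ∪ B) = π.adhS A ∪ π.adhS B := by
  apply Subset.antisymm
  · intro x hx
    by_contra hc
    simp only [Set.mem_union, not_or] at hc
    obtain ⟨h1, h2⟩ := hc
    simp only [adhS, mem_setOf_eq, not_forall] at h1 h2
    obtain ⟨U, hU, hUA⟩ := h1
    obtain ⟨W, hW, hWB⟩ := h2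
    obtain ⟨z, hz⟩ := hx (U ∩ W) (inter_mem hU hW)
    rcases hz.2 with hA | hB
    · exact hUA ⟨z, hz.1.1, hA⟩
    · exact hWB ⟨z, hz.1.2, hB⟩
  · exact Set.union_subset (π.adhS_mono Set.subset_union_left)
      (π.adhS_mono Set.subset_union_right)

lemma inh_mono {A B : Set X} (h : A ⊆ B) : π.inh A ⊆ π.inh B :=
  Set.compl_subset_compl.mpr (π.adhS_mono (Set.compl_subset_compl.mpr h))

lemma inh_inter (A B : Set X) : π.inh (A ∩ B) = π.inh A ∩ π.inh B := by
  simp only [inh, Set.compl_inter, adhS_union, Set.compl_union]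

lemma inh_univ : π.inh (univ : Set X) = univ := by
  simp [inh, adhS_empty]

lemma inh_subset (A : Set X) : π.inh A ⊆ A := by
  intro x hx
  by_contra hxA
  exact hx (π.subset_adhS Aᶜ hxA)

/-- The filter `F¹` of members of `F` whose inherence also belongs to `F`. -/
def F1 (F : Filter X) : Filter X where
  sets := {A | A ∈ F ∧ π.inh A ∈ F}
  univ_sets := ⟨univ_mem, by rw [π.inh_univ]; exact univ_mem⟩
  sets_of_superset := fun hA hAB =>
    ⟨mem_of_superset hA.1 hAB, mem_of_superset hA.2 (π.inh_mono hAB)⟩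
  inter_sets := fun hA hB =>
    ⟨inter_mem hA.1 hB.1, by rw [π.inh_inter]; exact inter_mem hA.2 hB.2⟩

lemma mem_F1 {F : Filter X} {A : Set X} : A ∈ π.F1 F ↔ A ∈ F ∧ π.inh A ∈ F := Iff.rfl

/-- The partial regularization `rπ`: vicinities generated by adherences of vicinities. -/
def rpre : Pretop X where
  V x := (π.V x).lift' π.adhS
  pure_le x := le_lift'.mpr fun U hU =>
    mem_pure.mpr (π.subset_adhS U (π.mem_of_vicinity hU))

lemma mem_rpre {x : X} {A : Set X} :
    A ∈ (π.rpre).V x ↔ ∃ U ∈ π.V x, π.adhS U ⊆ A :=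
  mem_lift'_sets fun _ _ h => π.adhS_mono h

end Pretop

/-- Continuity of maps between pretopological spaces. -/
def ContPre {X Y : Type*} (π : Pretop X) (τ : Pretop Y) (f : X → Y) : Prop :=
  ∀ x : X, ∀ W ∈ τ.V (f x), ∃ U ∈ π.V x, f '' U ⊆ W

/-- Perfect maps between pretopological spaces. -/
def PerfectPre {X Y : Type*} (π : Pretop X) (τ : Pretop Y) (f : X → Y) : Prop :=
  ∀ (F : Filter Y) (y : Y), τ.Conv F y → π.CompactAt (F.comap f) (f ⁻¹' {y})

/-- The filter of vicinities of a set `A`. -/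
def VSet {X : Type*} (π : Pretop X) (A : Set X) : Filter X where
  sets := {V | A ⊆ π.inh V}
  univ_sets := by simp [π.inh_univ]
  sets_of_superset := fun h hsub => h.trans (π.inh_mono hsub)
  inter_sets := fun h1 h2 => by
    rw [Set.mem_setOf_eq, π.inh_inter]; exact Set.subset_inter h1 h2

lemma mem_VSet {X : Type*} {π : Pretop X} {A V : Set X} :
    V ∈ VSet π A ↔ A ⊆ π.inh V := Iff.rfl

/-- `f^#[A] = {y : f⁻¹(y) ⊆ A}`. -/
def fsharp {X Y : Type*} (f : X → Y) (A : Set X) : Set Y := {y | f ⁻¹' {y} ⊆ A}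

/-- The θ-quotient pretopology on `Y`. -/
def thetaQuot {X Y : Type*} (π : Pretop X) (f : X → Y) : Pretop Y where
  V y := (VSet π (f ⁻¹' {y})).lift' (fsharp f)
  pure_le y := le_lift'.mpr fun V hV =>
    mem_pure.mpr (fun x hx => π.inh_subset V ((mem_VSet.mp hV) hx))

/-- Strong irreducibility. -/
def StronglyIrreducible {X Y : Type*} (π : Pretop X) (f : X → Y) : Prop :=
  ∀ U V : Set X, (π.inh U).Nonempty → (π.inh V).Nonempty → (U ∩ V).Nonempty →
    ∃ y : Y, f ⁻¹' {y} ⊆ U ∩ V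

/-- The simple extension `Y⁺` determined by a dense subset `S`. -/
def extPlus {X : Type*} (ρ : Pretop X) (S : Set X) : Pretop X where
  V p := (ρ.V p).lift' (fun W => insert p (W ∩ S))
  pure_le p := le_lift'.mpr fun W _ => mem_pure.mpr (Set.mem_insert p _)

/-- `o(A) = {p : ∃ W ∈ V(p), W ∩ S = A}`. -/
def oSet {X : Type*} (ρ : Pretop X) (S : Set X) (A : Set X) : Set X :=
  {p | ∃ W ∈ ρ.V p, W ∩ S = A}

/-- The strict extension `Y^#` determined by a dense subset `S`. -/
def extSharp {X : Type*} (ρ : Pretop X) (S : Set X) : Pretop X where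
  V p := (ρ.V p).lift' (fun W => oSet ρ S (W ∩ S))
  pure_le p := le_lift'.mpr fun W hW => mem_pure.mpr ⟨W, hW, rfl⟩

/-- The θ-pretopology of a topological space: vicinities are closed neighborhoods. -/
def theta (X : Type*) [TopologicalSpace X] : Pretop X where
  V x := (nhds x).lift' closure
  pure_le x := le_lift'.mpr fun U hU =>
    mem_pure.mpr (subset_closure (mem_of_mem_nhds hU))

/-- If `F` is a pretopologically open filter on a pretopological space, then its
π-adherence equals its adherence with respect to the partial regularization `rπ`. -/
theorem adh_eq_adh_rpre_of_open {X : Type*} (π : Pretop X) (F : Filter X)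
    (hF : ∀ A ∈ F, π.inh A ∈ F) :
    π.adh F = (π.rpre).adh F := by
  ext x
  simp only [Pretop.adh, mem_setOf_eq]
  constructor
  · intro h A hA B hB
    obtain ⟨U, hU, hsub⟩ := π.mem_rpre.mp hA
    obtain ⟨z, hzU, hzB⟩ := h U hU B hB
    exact ⟨z, hsub (π.subset_adhS U hzU), hzB⟩
  · intro h U hU B hB
    obtain ⟨z, hz1, hz2⟩ := h (π.adhS U) (π.mem_rpre.mpr ⟨U, hU, subset_rfl⟩)
      (π.inh B) (hF B hB)
    -- z ∈ adhS U and z ∈ inh B, i.e. ∃ V ∈ V z with V ⊆ B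
    simp only [Pretop.inh, Set.mem_compl_iff, Pretop.adhS, mem_setOf_eq,
      not_forall] at hz2
    obtain ⟨V, hV, hVB⟩ := hz2
    obtain ⟨w, hwV, hwU⟩ := hz1 V hV
    refine ⟨w, hwU, ?_⟩
    by_contra hwB
    exact hVB ⟨w, hwV, hwB⟩
end

section
/- If F is a filter on a pretopological space (X, π), then adh_{rπ} F = adh_π F¹, where F¹ = {F ∈ F : inh_π F ∈ F} and rπ is the partial regularization of π. -/
open Set Filter

/-- `adh_{rπ} F = adh_π F¹` for any filter `F` on a pretopological space. -/
theorem adh_rpre_eq_adh_F1 {X : Type*} (π : Pretop X) (F : Filter X) :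
    (π.rpre).adh F = π.adh (π.F1 F) := by
  ext x
  simp only [Pretop.adh, mem_setOf_eq, Meets]
  constructor
  · intro h U hU B hB
    obtain ⟨hBF, hiB⟩ := hB
    obtain ⟨z, hz1, hz2⟩ := h (π.adhS U) (π.mem_rpre.mpr ⟨U, hU, subset_rfl⟩) _ hiB
    simp only [Pretop.inh, mem_compl_iff, Pretop.adhS, mem_setOf_eq, not_forall,
      not_nonempty_iff_eq_empty] at hz2
    obtain ⟨W, hW, hWB⟩ := hz2
    obtain ⟨y, hyW, hyU⟩ := hz1 W hW
    refine ⟨y, hyU, ?_⟩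
    by_contra hy
    exact absurd hWB (Set.nonempty_iff_ne_empty.mp ⟨y, hyW, hy⟩)
  · intro h A hA B hB
    obtain ⟨U, hU, hUA⟩ := π.mem_rpre.mp hA
    rcases Set.eq_empty_or_nonempty (π.adhS U ∩ B) with he | ⟨z, hz1, hz2⟩
    · exfalso
      have hsub : B ⊆ π.inh Uᶜ := by
        intro y hy
        simp only [Pretop.inh, mem_compl_iff, compl_compl]
        intro hyU
        exact absurd he (Set.nonempty_iff_ne_empty.mp ⟨y, hyU, hy⟩)
      have hUc : Uᶜ ∈ π.F1 F :=
        ⟨mem_of_superset hB (hsub.trans (π.inh_subset Uᶜ)), mem_of_superset hB hsub⟩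
      obtain ⟨y, hy1, hy2⟩ := h U hU Uᶜ hUc
      exact hy2 hy1
    · exact ⟨z, hUA hz1, hz2⟩
end

section
/- A function f : (X, π) → (Y, τ) between pretopological spaces is perfect if and only if f[adh_π F] ⊇ adh_τ f(F) for every filter F on X. -/
open Set Filter

/-- A map between pretopological spaces is perfect iff `f[adh_π F] ⊇ adh_τ f(F)`
for every filter `F` on `X`. -/
theorem perfect_iff_adh_image {X Y : Type*} (π : Pretop X) (τ : Pretop Y) (f : X → Y) :
    PerfectPre π τ f ↔ ∀ F : Filter X, τ.adh (F.map f) ⊆ f '' π.adh F := by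
  constructor
  · intro hp F y hy
    have hconv : τ.Conv (τ.V y) y := le_rfl
    have hca := hp (τ.V y) y hconv
    have hmeets : Meets F ((τ.V y).comap f) := by
      intro A hA B hB
      obtain ⟨W, hW, hWB⟩ := mem_comap.mp hB
      have hfa : f '' A ∈ F.map f := mem_map.mpr (mem_of_superset hA (subset_preimage_image f A))
      obtain ⟨z, hzW, x, hxA, hfx⟩ := hy W hW (f '' A) hfa
      exact ⟨x, hxA, hWB (by simp [hfx, hzW])⟩
    obtain ⟨x, hxadh, hxy⟩ := hca F hmeets
    exact ⟨x, hxadh, hxy⟩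
  · intro h F y hconv G hG
    have hy : y ∈ τ.adh (G.map f) := by
      intro W hW S hS
      have hWF : W ∈ F := hconv hW
      have hB : f ⁻¹' W ∈ F.comap f := preimage_mem_comap hWF
      obtain ⟨x, hxS, hxW⟩ := hG (f ⁻¹' S) hS (f ⁻¹' W) hB
      exact ⟨f x, hxW, hxS⟩
    obtain ⟨x, hxadh, hxy⟩ := h G hy
    exact ⟨x, hxadh, hxy⟩
end

section
/- Let (X, π) be a pretopological space and A ⊆ X. Then the following are equivalent: (1) for every filter F on X, adh_π F ∩ A = ∅ implies there is F ∈ F with adh_π F ∩ A = ∅; (2) A is cover-compact, i.e., every cover C of A admits C₁,…,Cₙ ∈ C with A ⊆ inh_π(C₁ ∪ … ∪ Cₙ); (3) for every filter F with adh_π F ∩ A = ∅ there exist V ⊆ X and F ∈ F with A ⊆ inh_π V and V ∩ F = ∅. -/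
open Set Filter

/-- Characterizations of cover-compact subsets of a pretopological space. -/
theorem coverCompact_tfae {X : Type*} (π : Pretop X) (A : Set X) :
    List.TFAE [
      ∀ F : Filter X, π.adh F ∩ A = ∅ → ∃ B ∈ F, π.adhS B ∩ A = ∅,
      π.CoverCompact A,
      ∀ F : Filter X, π.adh F ∩ A = ∅ →
        ∃ V : Set X, ∃ B ∈ F, A ⊆ π.inh V ∧ V ∩ B = ∅] := by

  tfae_have 1 → 3
  · intro h1 F hF
    obtain ⟨B, hB, hBA⟩ := h1 F hF
    refine ⟨Bᶜ, B, hB, ?_, by simp⟩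
    intro x hx
    simp only [Pretop.inh, compl_compl, Set.mem_compl_iff]
    intro hx'
    exact Set.eq_empty_iff_forall_notMem.mp hBA x ⟨hx', hx⟩
  tfae_have 3 → 1
  · intro h3 F hF
    obtain ⟨V, B, hB, hAV, hVB⟩ := h3 F hF
    refine ⟨B, hB, ?_⟩
    rw [Set.eq_empty_iff_forall_notMem]
    rintro x ⟨hxB, hxA⟩
    have hxi : x ∉ π.adhS Vᶜ := hAV hxA
    simp only [Pretop.adhS, Set.mem_setOf_eq, not_forall] at hxi
    obtain ⟨U, hU, hUV⟩ := hxi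
    have hUsub : U ⊆ V := by
      intro z hz
      by_contra hzV
      exact hUV ⟨z, hz, hzV⟩
    obtain ⟨z, hzU, hzB⟩ := hxB U hU
    exact Set.eq_empty_iff_forall_notMem.mp hVB z ⟨hUsub hzU, hzB⟩
  tfae_have 2 → 1
  · intro h2 F hF
    have hcov : π.IsCover {U | ∃ B ∈ F, U ∩ B = ∅} A := by
      intro x hx
      have hx' : x ∉ π.adh F := fun hc =>
        Set.eq_empty_iff_forall_notMem.mp hF x ⟨hc, hx⟩
      simp only [Pretop.adh, Meets, Set.mem_setOf_eq, not_forall] at hx'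
      obtain ⟨U, hU, B, hB, hUB⟩ := hx'
      refine ⟨U, ⟨B, hB, ?_⟩, hU⟩
      rw [Set.eq_empty_iff_forall_notMem]
      exact fun z hz => hUB ⟨z, hz.1, hz.2⟩
    obtain ⟨D, hD, hDA⟩ := h2 _ hcov
    classical
    set g : Set X → Set X := fun U =>
      if h : ∃ B ∈ F, U ∩ B = ∅ then h.choose else Set.univ with hg
    have hgF : ∀ U ∈ D, g U ∈ F ∧ U ∩ g U = ∅ := by
      intro U hU
      have h := hD hU
      simp only [Set.mem_setOf_eq] at h
      simp only [hg, dif_pos h]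
      exact ⟨h.choose_spec.1, h.choose_spec.2⟩
    refine ⟨⋂ U ∈ D, g U, ?_, ?_⟩
    · exact (Filter.biInter_mem D.finite_toSet).mpr fun U hU => (hgF U hU).1
    · rw [Set.eq_empty_iff_forall_notMem]
      rintro x ⟨hxB, hxA⟩
      have hxi : x ∉ π.adhS (⋃ U ∈ D, U)ᶜ := hDA hxA
      simp only [Pretop.adhS, Set.mem_setOf_eq, not_forall] at hxi
      obtain ⟨W, hW, hWc⟩ := hxi
      obtain ⟨z, hzW, hzB⟩ := hxB W hW
      have hzU : z ∈ ⋃ U ∈ D, U := by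
        by_contra hc
        exact hWc ⟨z, hzW, hc⟩
      simp only [Set.mem_iUnion] at hzU
      obtain ⟨U, hUD, hzU⟩ := hzU
      have hzgU : z ∈ g U := by
        simp only [Set.mem_iInter] at hzB
        exact hzB U hUD
      exact Set.eq_empty_iff_forall_notMem.mp (hgF U hUD).2 z ⟨hzU, hzgU⟩
  tfae_have 1 → 2
  · intro h1 C hC
    classical
    set F := Filter.generate (compl '' C) with hFdef
    have hFA : π.adh F ∩ A = ∅ := by
      rw [Set.eq_empty_iff_forall_notMem]
      rintro x ⟨hxF, hxA⟩
      obtain ⟨U, hUC, hUV⟩ := hC x hxA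
      obtain ⟨z, hz1, hz2⟩ := hxF U hUV Uᶜ
        (Filter.GenerateSets.basic ⟨U, hUC, rfl⟩)
      exact hz2 hz1
    obtain ⟨B, hB, hBA⟩ := h1 F hFA
    rw [hFdef, Filter.mem_generate_iff] at hB
    obtain ⟨t, htC, htfin, htB⟩ := hB
    have hsfin : (compl '' t).Finite := htfin.image _
    refine ⟨hsfin.toFinset, ?_, ?_⟩
    · intro U hU
      simp only [Set.Finite.coe_toFinset, Set.mem_image] at hU
      obtain ⟨W, hWt, rfl⟩ := hU
      obtain ⟨U', hU'C, rfl⟩ := htC hWt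
      rwa [compl_compl]
    · have hunion : (⋃ U ∈ hsfin.toFinset, U) = ⋃₀ (compl '' t) := by
        ext z
        simp [Set.mem_sUnion]
      rw [hunion]
      have hcompl : (⋃₀ (compl '' t))ᶜ = ⋂₀ t := by
        rw [Set.compl_sUnion, Set.compl_compl_image]
      intro x hxA
      have hx : x ∉ π.adhS B :=
        fun hc => Set.eq_empty_iff_forall_notMem.mp hBA x ⟨hc, hxA⟩
      simp only [Pretop.inh, Set.mem_compl_iff, hcompl]
      exact fun hc => hx (π.adhS_mono htB hc)
  tfae_finish
end

section
/- Let f : (X, π) → (Y, τ) be a map between pretopological spaces such that (a) f[adh_π A] ⊇ adh_τ f[A] for every A ⊆ X and (b) f⁻(y) is cover-compact for every y ∈ Y. Then f is perfect. -/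
open Set Filter

/-- If `f[adh_π A] ⊇ adh_τ f[A]` for every set `A` and every fiber of `f` is
cover-compact, then `f` is perfect. -/
theorem perfect_of_adh_image_and_coverCompact_fibers {X Y : Type*}
    (π : Pretop X) (τ : Pretop Y) (f : X → Y)
    (ha : ∀ A : Set X, τ.adhS (f '' A) ⊆ f '' π.adhS A)
    (hb : ∀ y : Y, π.CoverCompact (f ⁻¹' {y})) :
    PerfectPre π τ f := by
  intro F y hFy G hG
  by_contra hc
  rw [Set.not_nonempty_iff_eq_empty] at hc
  -- Build a cover of the fiber from complements of members of G
  have hcover : π.IsCover (compl '' G.sets) (f ⁻¹' {y}) := by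
    intro x hx
    have hxadh : x ∉ π.adh G := by
      intro h
      have hne : (π.adh G ∩ f ⁻¹' {y}).Nonempty := ⟨x, h, hx⟩
      exact hne.ne_empty hc
    simp only [Pretop.adh, Meets, mem_setOf_eq, not_forall] at hxadh
    obtain ⟨A, hA, B, hB, hAB⟩ := hxadh
    rw [Set.not_nonempty_iff_eq_empty, Set.eq_empty_iff_forall_notMem] at hAB
    refine ⟨Bᶜ, ⟨B, hB, rfl⟩, ?_⟩
    exact (π.V x).sets_of_superset hA fun z hz hzB => hAB z ⟨hz, hzB⟩
  obtain ⟨D, hDC, hDsub⟩ := hb y (compl '' G.sets) hcover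
  -- B is the intersection of complements of cover members, a member of G
  set B : Set X := ⋂ U ∈ D, Uᶜ with hBdef
  have hBG : B ∈ G := by
    rw [hBdef, Filter.biInter_finset_mem]
    intro U hU
    obtain ⟨B', hB', hB'eq⟩ := hDC hU
    rw [← hB'eq, compl_compl]
    exact hB'
  have hUnion : (⋃ U ∈ D, U) = Bᶜ := by
    simp [hBdef, Set.compl_iInter]
  -- fiber avoids adhS B
  have hfiber : f ⁻¹' {y} ⊆ (π.adhS B)ᶜ := by
    rw [hUnion] at hDsub
    intro x hx
    have := hDsub hx
    rw [Pretop.inh, compl_compl] at this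
    exact this
  -- y adheres to f '' B
  have hy : y ∈ τ.adhS (f '' B) := by
    intro W hW
    have hWF : W ∈ F := hFy hW
    obtain ⟨z, hz1, hz2⟩ := hG B hBG (f ⁻¹' W) ⟨W, hWF, subset_rfl⟩
    exact ⟨f z, hz2, z, hz1, rfl⟩
  obtain ⟨x, hxadhS, hfx⟩ := ha B hy
  exact hfiber hfx hxadhS
end

section
/- If f : (X, π) → (Y, τ) is a perfect and continuous map between pretopological spaces, then f[adh_π A] = adh_τ f[A] for every A ⊆ X, and f⁻(y) is cover-compact for every y ∈ Y. -/
open Set Filter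

/-- A perfect continuous map satisfies `f[adh_π A] = adh_τ f[A]` for every set `A`,
and has cover-compact fibers. -/
theorem perfect_continuous_imp {X Y : Type*} (π : Pretop X) (τ : Pretop Y) (f : X → Y)
    (hperf : PerfectPre π τ f) (hcont : ContPre π τ f) :
    (∀ A : Set X, f '' π.adhS A = τ.adhS (f '' A)) ∧
    (∀ y : Y, π.CoverCompact (f ⁻¹' {y})) := by

  constructor
  · intro A
    apply Subset.antisymm
    · rintro _ ⟨x, hx, rfl⟩
      intro W hW
      obtain ⟨U, hU, hUW⟩ := hcont x W hW
      obtain ⟨z, hzU, hzA⟩ := hx U hU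
      exact ⟨f z, hUW ⟨z, hzU, rfl⟩, ⟨z, hzA, rfl⟩⟩
    · intro y hy
      have hmeets : Meets (𝓟 A) ((τ.V y).comap f) := by
        intro A' hA' B hB
        obtain ⟨W, hW, hWB⟩ := Filter.mem_comap.mp hB
        obtain ⟨w, hwW, a, haA, rfl⟩ := hy W hW
        exact ⟨a, mem_principal.mp hA' haA, hWB hwW⟩
      obtain ⟨x, hxadh, hxy⟩ := hperf (τ.V y) y le_rfl (𝓟 A) hmeets
      exact ⟨x, fun U hU => hxadh U hU A (mem_principal_self A), hxy⟩
  · intro y C hC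
    classical
    by_contra hcon
    push_neg at hcon
    have key : ∀ D : Finset (Set X), ↑D ⊆ C →
        ∃ z, f z = y ∧ z ∈ π.adhS ((⋃ U ∈ D, U)ᶜ) := by
      intro D hD
      obtain ⟨z, hz1, hz2⟩ := not_subset.mp (hcon D hD)
      simp only [Pretop.inh, Set.mem_compl_iff, not_not] at hz2
      exact ⟨z, hz1, hz2⟩
    set G : Filter X := {
      sets := {B | ∃ D : Finset (Set X), ↑D ⊆ C ∧ (⋃ U ∈ D, U)ᶜ ⊆ B}
      univ_sets := ⟨∅, by simp, subset_univ _⟩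
      sets_of_superset := fun ⟨D, hD, hsub⟩ h => ⟨D, hD, hsub.trans h⟩
      inter_sets := fun {B1 B2} ⟨D1, hD1, h1⟩ ⟨D2, hD2, h2⟩ =>
        ⟨D1 ∪ D2, by
          rw [Finset.coe_union]; exact union_subset hD1 hD2, by
          rw [Finset.set_biUnion_union, compl_union]
          exact fun w hw => ⟨h1 hw.1, h2 hw.2⟩⟩ } with hG
    have memG : ∀ B : Set X, B ∈ G ↔
        ∃ D : Finset (Set X), ↑D ⊆ C ∧ (⋃ U ∈ D, U)ᶜ ⊆ B := fun B => Iff.rfl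
    have hmeets : Meets G ((τ.V y).comap f) := by
      intro B1 hB1 B2 hB2
      obtain ⟨D, hD, hsub⟩ := (memG B1).mp hB1
      obtain ⟨W, hW, hWB⟩ := Filter.mem_comap.mp hB2
      obtain ⟨z, hzy, hz⟩ := key D hD
      have hWz : W ∈ τ.V (f z) := by rw [hzy]; exact hW
      obtain ⟨U', hU', hU'W⟩ := hcont z W hWz
      obtain ⟨w, hwU', hwC⟩ := hz U' hU'
      exact ⟨w, hsub hwC, hWB (hU'W ⟨w, hwU', rfl⟩)⟩
    obtain ⟨x, hxadh, hxy⟩ := hperf (τ.V y) y le_rfl G hmeets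
    obtain ⟨U, hUC, hUV⟩ := hC x hxy
    have hmem : (⋃ V ∈ ({U} : Finset (Set X)), V)ᶜ ∈ G :=
      (memG _).mpr ⟨{U}, by simpa, subset_rfl⟩
    obtain ⟨w, hwU, hwc⟩ := hxadh U hUV _ hmem
    simp only [Finset.mem_singleton, Set.iUnion_iUnion_eq_left, Set.mem_compl_iff] at hwc
    exact hwc hwU
end

section
/- Let (X, π) be a pretopological space, F a filter on X, and A ⊆ X. Then F is compact at A if and only if whenever C is a cover of A, there exist F ∈ F and C₁,…,Cₙ ∈ C such that F ⊆ C₁ ∪ … ∪ Cₙ. -/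
open Set Filter

/-- A filter `F` is compact at `A` iff every cover of `A` has a finite subfamily
whose union contains a member of `F`. -/
theorem compactAt_iff_cover {X : Type*} (π : Pretop X) (F : Filter X) (A : Set X) :
    π.CompactAt F A ↔ ∀ C : Set (Set X), π.IsCover C A →
      ∃ B ∈ F, ∃ D : Finset (Set X), ↑D ⊆ C ∧ B ⊆ ⋃ U ∈ D, U := by
  constructor
  · intro hc C hC
    by_contra hno
    push_neg at hno
    set G := Filter.generate {S | ∃ U ∈ C, S = Uᶜ} with hG
    have hMeets : Meets G F := by
      intro S hS B hB
      rw [Filter.mem_generate_iff] at hS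
      obtain ⟨t, htsub, htfin, htS⟩ := hS
      have hDfin : (compl '' t).Finite := htfin.image _
      have hDsub : ↑hDfin.toFinset ⊆ C := by
        intro U hU
        simp only [Set.Finite.coe_toFinset, Set.mem_image] at hU
        obtain ⟨S', hS', rfl⟩ := hU
        obtain ⟨U', hU', rfl⟩ := htsub hS'
        simpa using hU'
      have hnotsub := hno B hB hDfin.toFinset hDsub
      rw [Set.not_subset] at hnotsub
      obtain ⟨x, hxB, hxU⟩ := hnotsub
      refine ⟨x, ?_, hxB⟩
      apply htS
      intro S' hS'
      obtain ⟨U', hU', rfl⟩ := htsub hS'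
      intro hxU'
      apply hxU
      simp only [Set.mem_iUnion, Set.Finite.mem_toFinset, Set.mem_image]
      exact ⟨U', ⟨U'ᶜ, hS', compl_compl U'⟩, hxU'⟩
    obtain ⟨x, hxadh, hxA⟩ := hc G hMeets
    obtain ⟨U, hUC, hUV⟩ := hC x hxA
    have hUc : Uᶜ ∈ G := Filter.mem_generate_of_mem ⟨U, hUC, rfl⟩
    obtain ⟨y, hy1, hy2⟩ := hxadh U hUV Uᶜ hUc
    exact hy2 hy1
  · intro hc G hMeets
    by_contra hno
    rw [Set.not_nonempty_iff_eq_empty] at hno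
    set C : Set (Set X) := {U | ∃ S ∈ G, U ∩ S = ∅} with hCdef
    have hCcover : π.IsCover C A := by
      intro x hxA
      have hxnadh : x ∉ π.adh G := fun hx =>
        absurd (hno ▸ (⟨hx, hxA⟩ : x ∈ π.adh G ∩ A)) (Set.notMem_empty x)
      simp only [Pretop.adh, Set.mem_setOf_eq, Meets] at hxnadh
      push_neg at hxnadh
      obtain ⟨U, hUV, S, hSG, hUS⟩ := hxnadh
      exact ⟨U, ⟨S, hSG, hUS⟩, hUV⟩
    obtain ⟨B, hBF, D, hDC, hBsub⟩ := hc C hCcover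
    classical
    have hpick : ∀ U ∈ D, ∃ S ∈ G, U ∩ S = ∅ := fun U hU => hDC hU
    choose! s hsG hsU using hpick
    have hS : (⋂ U ∈ D, s U) ∈ G := Filter.biInter_finset_mem _ |>.mpr hsG
    obtain ⟨z, hz1, hz2⟩ := hMeets _ hS B hBF
    obtain ⟨U, hUD, hzU⟩ := Set.mem_iUnion₂.mp (hBsub hz2)
    have hzs : z ∈ s U := Set.mem_iInter₂.mp hz1 U hUD
    have hmem : z ∈ U ∩ s U := ⟨hzU, hzs⟩
    rw [hsU U hUD] at hmem
    exact hmem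
end

section
/- A Hausdorff topological space X is H-closed (every open filter on X has nonempty adherence) if and only if the pretopological space (X, θ) is compact, where θ is the convergence given by F →_θ x iff every closed neighborhood of x belongs to F (i.e., cl U ∈ F for every open U containing x). -/
open Set Filter

/-- A Hausdorff topological space is H-closed (every proper open filter has nonempty
adherence) iff the pretopological space `(X, θ)` is compact. -/
theorem hClosed_iff_theta_compact {X : Type*} [TopologicalSpace X] [T2Space X] :
    (∀ F : Filter X, F.NeBot → (∀ A ∈ F, ∃ U ∈ F, IsOpen U ∧ U ⊆ A) →
      (⋂ A ∈ F, closure A).Nonempty) ↔ (theta X).IsCompactPre := by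
  have hmemV : ∀ (x : X) (A : Set X),
      A ∈ (theta X).V x ↔ ∃ N ∈ nhds x, closure N ⊆ A := by
    intro x A
    exact mem_lift'_sets (fun _ _ h => closure_mono h)
  constructor
  · intro H F hF
    -- the open filter generated by open supersets of members of F
    set G : Filter X :=
      { sets := {S | ∃ U, IsOpen U ∧ U ⊆ S ∧ ∃ A ∈ F, A ⊆ U}
        univ_sets := ⟨univ, isOpen_univ, subset_rfl, univ, univ_mem, subset_rfl⟩
        sets_of_superset := by
          rintro S T ⟨U, hU, hUS, A, hA, hAU⟩ hST
          exact ⟨U, hU, hUS.trans hST, A, hA, hAU⟩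
        inter_sets := by
          rintro S T ⟨U, hU, hUS, A, hA, hAU⟩ ⟨V, hV, hVT, B, hB, hBV⟩
          exact ⟨U ∩ V, hU.inter hV, Set.inter_subset_inter hUS hVT,
            A ∩ B, inter_mem hA hB, Set.inter_subset_inter hAU hBV⟩ } with hG
    have hGneBot : G.NeBot := by
      refine ⟨fun hbot => ?_⟩
      have : (∅ : Set X) ∈ G := hbot ▸ mem_bot
      obtain ⟨U, _, hUS, A, hA, hAU⟩ := this
      have : A = ∅ := Set.eq_empty_of_subset_empty (hAU.trans hUS)
      exact (Filter.nonempty_of_mem hA).ne_empty this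
    have hGbase : ∀ S ∈ G, ∃ U ∈ G, IsOpen U ∧ U ⊆ S := by
      rintro S ⟨U, hU, hUS, A, hA, hAU⟩
      exact ⟨U, ⟨U, hU, subset_rfl, A, hA, hAU⟩, hU, hUS⟩
    obtain ⟨x, hx⟩ := H G hGneBot hGbase
    simp only [Set.mem_iInter] at hx
    refine ⟨x, ?_⟩
    intro A hA B hB
    obtain ⟨N, hN, hNA⟩ := (hmemV x A).mp hA
    suffices h : (closure N ∩ B).Nonempty by
      exact h.mono (Set.inter_subset_inter_left B hNA)
    by_contra hc
    rw [Set.not_nonempty_iff_eq_empty] at hc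
    have hBsub : B ⊆ (closure N)ᶜ := by
      intro z hz
      intro hzc
      exact Set.eq_empty_iff_forall_notMem.mp hc z ⟨hzc, hz⟩
    have hmemG : (closure N)ᶜ ∈ G :=
      ⟨(closure N)ᶜ, isClosed_closure.isOpen_compl, subset_rfl, B, hB, hBsub⟩
    have hxcl : x ∈ closure ((closure N)ᶜ) := hx _ hmemG
    rw [mem_closure_iff] at hxcl
    obtain ⟨z, hz1, hz2⟩ := hxcl (interior N) isOpen_interior
      (mem_interior_iff_mem_nhds.mpr hN)
    exact hz2 (subset_closure (interior_subset hz1))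
  · intro hC F hF hBase
    obtain ⟨x, hx⟩ := hC F hF
    refine ⟨x, ?_⟩
    simp only [Set.mem_iInter]
    intro A hA
    obtain ⟨U, hU, hUopen, hUA⟩ := hBase A hA
    rw [mem_closure_iff]
    intro O hO hxO
    have hclO : closure O ∈ (theta X).V x :=
      (hmemV x (closure O)).mpr ⟨O, hO.mem_nhds hxO, subset_rfl⟩
    obtain ⟨z, hz1, hz2⟩ := hx (closure O) hclO U hU
    rw [mem_closure_iff] at hz1
    obtain ⟨w, hw1, hw2⟩ := hz1 U hUopen hz2
    exact ⟨w, hw2, hUA hw1⟩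
end

section
/- Let X be a Hausdorff topological space and A ⊆ X. Then A is an H-set in X (every cover of A by open subsets of X has a finite subfamily whose closures cover A) if and only if A is a compact subset of the pretopological space (X, θ): every filter F on X that meets A satisfies adh_θ F ∩ A ≠ ∅. -/
open Set Filter

/-- Auxiliary filter: generated by the sets `A \ ⋃ U ∈ D, closure U` for finite `D ⊆ C`. -/
def hsetFilter {X : Type*} [TopologicalSpace X] (A : Set X) (C : Set (Set X)) : Filter X where
  sets := {B | ∃ D : Finset (Set X), ↑D ⊆ C ∧ A \ (⋃ U ∈ D, closure U) ⊆ B}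
  univ_sets := ⟨∅, by simp, by simp⟩
  sets_of_superset := fun ⟨D, hD, hsub⟩ hBB' => ⟨D, hD, hsub.trans hBB'⟩
  inter_sets := by
    classical
    rintro B B' ⟨D, hD, hsub⟩ ⟨D', hD', hsub'⟩
    refine ⟨D ∪ D', by rw [Finset.coe_union]; exact Set.union_subset hD hD', ?_⟩
    intro z hz
    constructor
    · refine hsub ⟨hz.1, fun hmem => hz.2 ?_⟩
      obtain ⟨U, hU, hcl⟩ := Set.mem_iUnion₂.mp hmem
      exact Set.mem_iUnion₂.mpr ⟨U, Finset.mem_union_left _ hU, hcl⟩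
    · refine hsub' ⟨hz.1, fun hmem => hz.2 ?_⟩
      obtain ⟨U, hU, hcl⟩ := Set.mem_iUnion₂.mp hmem
      exact Set.mem_iUnion₂.mpr ⟨U, Finset.mem_union_right _ hU, hcl⟩

lemma mem_hsetFilter {X : Type*} [TopologicalSpace X] {A : Set X} {C : Set (Set X)}
    {B : Set X} :
    B ∈ hsetFilter A C ↔ ∃ D : Finset (Set X), ↑D ⊆ C ∧ A \ (⋃ U ∈ D, closure U) ⊆ B :=
  Iff.rfl

/-- `A` is an H-set in a Hausdorff space `X` iff `A` is a compact subset of the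
pretopological space `(X, θ)`. -/
theorem hSet_iff_theta_compactSubset {X : Type*} [TopologicalSpace X] [T2Space X]
    (A : Set X) :
    (∀ C : Set (Set X), (∀ U ∈ C, IsOpen U) → A ⊆ ⋃₀ C →
      ∃ D : Finset (Set X), ↑D ⊆ C ∧ A ⊆ ⋃ U ∈ D, closure U) ↔
    (∀ F : Filter X, (∀ B ∈ F, (B ∩ A).Nonempty) →
      ((theta X).adh F ∩ A).Nonempty) := by
  constructor
  · -- H-set → filter compact
    intro hH F hF
    by_contra hadh
    rw [Set.not_nonempty_iff_eq_empty] at hadh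
    set C : Set (Set X) := {U | IsOpen U ∧ ∃ B ∈ F, closure U ∩ B = ∅} with hCdef
    have hcov : A ⊆ ⋃₀ C := by
      intro x hx
      have hx' : x ∉ (theta X).adh F := fun h => by
        have : x ∈ (theta X).adh F ∩ A := ⟨h, hx⟩
        rw [hadh] at this; exact this
      simp only [Pretop.adh, Meets, mem_setOf_eq, not_forall] at hx'
      obtain ⟨U, hU, B, hB, hUB⟩ := hx'
      rw [Set.not_nonempty_iff_eq_empty] at hUB
      obtain ⟨N, hN, hNU⟩ :=
        (Filter.mem_lift'_sets (monotone_closure X)).mp hU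
      obtain ⟨O, hON, hO, hxO⟩ := mem_nhds_iff.mp hN
      refine ⟨O, ⟨hO, B, hB, ?_⟩, hxO⟩
      have hsub : closure O ∩ B ⊆ U ∩ B :=
        Set.inter_subset_inter ((closure_mono hON).trans hNU) le_rfl
      exact Set.subset_empty_iff.mp (hUB ▸ hsub)
    obtain ⟨D, hDC, hDcov⟩ := hH C (fun U hU => hU.1) hcov
    have key : ∀ U : Set X, ∃ B ∈ F, (U ∈ D → closure U ∩ B = ∅) := by
      intro U
      by_cases h : U ∈ D
      · obtain ⟨_, B, hB, hd⟩ := hDC h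
        exact ⟨B, hB, fun _ => hd⟩
      · exact ⟨univ, univ_mem, fun h' => absurd h' h⟩
    choose B hBF hBd using key
    have hBmem : (⋂ U ∈ D, B U) ∈ F :=
      (Filter.biInter_finset_mem D).mpr fun U _ => hBF U
    obtain ⟨z, hzB, hzA⟩ := hF _ hBmem
    obtain ⟨U, hU, hzU⟩ := Set.mem_iUnion₂.mp (hDcov hzA)
    have hzBU : z ∈ B U := by
      simp only [Set.mem_iInter] at hzB
      exact hzB U hU
    have : z ∈ closure U ∩ B U := ⟨hzU, hzBU⟩
    rw [hBd U hU] at this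
    exact this
  · -- filter compact → H-set
    intro hK C hCopen hCcov
    by_contra hnot
    push_neg at hnot
    have hne : ∀ D : Finset (Set X), ↑D ⊆ C → (A \ ⋃ U ∈ D, closure U).Nonempty := by
      intro D hD
      obtain ⟨a, haA, ha⟩ := Set.not_subset.mp (hnot D hD)
      exact ⟨a, haA, ha⟩
    have hFA : ∀ B ∈ hsetFilter A C, (B ∩ A).Nonempty := by
      intro B hB
      obtain ⟨D, hD, hsub⟩ := mem_hsetFilter.mp hB
      obtain ⟨z, hz⟩ := hne D hD
      exact ⟨z, hsub hz, hz.1⟩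
    obtain ⟨x, hxadh, hxA⟩ := hK _ hFA
    obtain ⟨U, hUC, hxU⟩ := hCcov hxA
    have h1 : closure U ∈ (theta X).V x :=
      Filter.mem_lift' ((hCopen U hUC).mem_nhds hxU)
    have h2 : A \ closure U ∈ hsetFilter A C := by
      refine mem_hsetFilter.mpr ⟨{U}, by simpa using hUC, ?_⟩
      simp
    obtain ⟨z, hz1, hz2⟩ := hxadh (closure U) h1 (A \ closure U) h2
    exact hz2.2 hz1
end

section
/- For a Hausdorff pretopological space (X, π) the following are equivalent: (1) (X, rπ) is compact (X is PHC); (2) every π-cover C of X has C₁,…,Cₙ ∈ C with X = adh_π C₁ ∪ … ∪ adh_π Cₙ; (3) every inherent filter on X has nonempty π-adherence; (4) for every filter F on X, adh_π F¹ ≠ ∅. -/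
open Set Filter

/-- Characterizations of PHC spaces. -/
theorem phc_tfae {X : Type*} (π : Pretop X) (hH : π.HausdorffPre) :
    List.TFAE [
      (π.rpre).IsCompactPre,
      ∀ C : Set (Set X), π.IsCover C Set.univ →
        ∃ D : Finset (Set X), ↑D ⊆ C ∧ (⋃ U ∈ D, π.adhS U) = Set.univ,
      ∀ F : Filter X, (∀ B ∈ F, (π.inh B).Nonempty) → (π.adh F).Nonempty,
      ∀ F : Filter X, F.NeBot → (π.adh (π.F1 F)).Nonempty] := by
  classical
  tfae_have 1 → 2 := by
    intro h1 C hC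
    by_contra hno
    push_neg at hno
    set S : Set (Set X) := (fun U => (π.adhS U)ᶜ) '' C with hS
    have hNB : (Filter.generate S).NeBot := by
      rw [Filter.neBot_iff]
      intro hbot
      have hmem : (∅ : Set X) ∈ Filter.generate S := by rw [hbot]; exact mem_bot
      rcases Filter.mem_generate_iff.mp hmem with ⟨t, htS, htf, hts⟩
      set g : Set X → Set X := fun a =>
        if h : ∃ U ∈ C, (π.adhS U)ᶜ = a then h.choose else a with hg
      have hgspec : ∀ a ∈ t, g a ∈ C ∧ (π.adhS (g a))ᶜ = a := by
        intro a ha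
        have := htS ha
        rw [hS, Set.mem_image] at this
        obtain ⟨U, hU, hUa⟩ := this
        have hex : ∃ U ∈ C, (π.adhS U)ᶜ = a := ⟨U, hU, hUa⟩
        rw [hg]; simp only [dif_pos hex]
        exact ⟨hex.choose_spec.1, hex.choose_spec.2⟩
      refine hno (htf.toFinset.image g) ?_ ?_
      · intro u hu
        simp only [Finset.coe_image, Set.mem_image, Set.Finite.mem_toFinset] at hu
        obtain ⟨a, ha, rfl⟩ := hu
        exact (hgspec a (htf.mem_toFinset.mp ha)).1
      · ext x
        simp only [Set.mem_iUnion, Finset.mem_image, Set.Finite.mem_toFinset,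
          Set.mem_univ, iff_true]
        have hx : x ∉ ⋂₀ t := fun h => (hts h).elim
        rw [Set.mem_sInter] at hx
        push_neg at hx
        obtain ⟨a, ha, hxa⟩ := hx
        refine ⟨g a, ⟨a, ha, rfl⟩, ?_⟩
        have := (hgspec a ha).2
        rw [← this] at hxa
        simpa using hxa
    obtain ⟨x, hx⟩ := h1 (Filter.generate S) hNB
    obtain ⟨U, hU, hUx⟩ := hC x (Set.mem_univ x)
    have h1' : π.adhS U ∈ (π.rpre).V x := π.mem_rpre.mpr ⟨U, hUx, subset_rfl⟩
    have h2' : (π.adhS U)ᶜ ∈ Filter.generate S :=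
      Filter.mem_generate_of_mem ⟨U, hU, rfl⟩
    have := hx _ h1' _ h2'
    simp at this
  tfae_have 2 → 3 := by
    intro h2 F hF
    by_contra hadh
    rw [Set.not_nonempty_iff_eq_empty] at hadh
    set C : Set (Set X) := {U | ∃ B ∈ F, U ∩ B = ∅} with hCdef
    have hCov : π.IsCover C Set.univ := by
      intro x _
      have hx : x ∉ π.adh F := by rw [hadh]; exact Set.notMem_empty x
      simp only [Pretop.adh, Meets, Set.mem_setOf_eq] at hx
      push_neg at hx
      obtain ⟨U, hU, B, hB, hUB⟩ := hx
      exact ⟨U, ⟨B, hB, hUB⟩, hU⟩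
    obtain ⟨D, hD, hUniv⟩ := h2 C hCov
    set g : Set X → Set X := fun U =>
      if h : ∃ B ∈ F, U ∩ B = ∅ then h.choose else Set.univ with hg
    have hgF : ∀ U, g U ∈ F := by
      intro U
      rw [hg]
      by_cases h : ∃ B ∈ F, U ∩ B = ∅
      · simp only [dif_pos h]; exact h.choose_spec.1
      · simp only [dif_neg h]; exact univ_mem
    have hgdisj : ∀ U ∈ C, U ∩ g U = ∅ := by
      intro U hU
      have h : ∃ B ∈ F, U ∩ B = ∅ := hU
      simp only [hg, dif_pos h]
      exact h.choose_spec.2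
    have hB : (⋂ U ∈ D, g U) ∈ F :=
      (Filter.biInter_mem D.finite_toSet).mpr fun U _ => hgF U
    obtain ⟨x, hxinh⟩ := hF _ hB
    have hxU : x ∈ ⋃ U ∈ D, π.adhS U := hUniv ▸ Set.mem_univ x
    simp only [Set.mem_iUnion] at hxU
    obtain ⟨U, hUD, hxU⟩ := hxU
    have hUC : U ∈ C := hD hUD
    have hsub : U ⊆ (⋂ V ∈ D, g V)ᶜ := by
      intro y hy hyB
      have hyg : y ∈ g U := by
        simp only [Set.mem_iInter] at hyB; exact hyB U hUD
      have : y ∈ U ∩ g U := ⟨hy, hyg⟩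
      rw [hgdisj U hUC] at this
      exact this
    exact hxinh (π.adhS_mono hsub hxU)
  tfae_have 3 → 4 := by
    intro h3 F hF
    refine h3 (π.F1 F) fun B hB => ?_
    obtain ⟨hB1, hB2⟩ := hB
    have hne : (π.inh B).Nonempty := Filter.nonempty_of_mem hB2
    obtain ⟨x, hx⟩ := hne
    exact ⟨x, hx⟩
  tfae_have 4 → 1 := by
    intro h4 F hF
    obtain ⟨x, hx⟩ := h4 F hF
    refine ⟨x, ?_⟩
    intro A hA B hB
    obtain ⟨U, hU, hUA⟩ := π.mem_rpre.mp hA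
    have key : (π.adhS U ∩ B).Nonempty := by
      by_contra hemp
      rw [Set.not_nonempty_iff_eq_empty] at hemp
      have hBsub : B ⊆ (π.adhS U)ᶜ := fun y hy hyA =>
        Set.eq_empty_iff_forall_notMem.mp hemp y ⟨hyA, hy⟩
      have hinh : π.inh Uᶜ ∈ F := by
        refine mem_of_superset hB ?_
        rw [Pretop.inh, compl_compl]
        exact hBsub
      have hUc : Uᶜ ∈ F := mem_of_superset hinh (π.inh_subset _)
      have hF1 : Uᶜ ∈ π.F1 F := ⟨hUc, hinh⟩
      have := hx U hU Uᶜ hF1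
      simp at this
    obtain ⟨y, hy1, hy2⟩ := key
    exact ⟨y, hUA hy1, hy2⟩
  tfae_finish
end

section
/- Let (X, π) be a Hausdorff pretopological space. If A, B ⊆ X are disjoint cover-compact subsets, then there exist U with A ⊆ inh_π U, V with B ⊆ inh_π V, and U ∩ V = ∅. -/
open Set Filter

lemma point_sep {X : Type*} (π : Pretop X) (hH : π.HausdorffPre)
    {B : Set X} {x : X} (hB : π.CoverCompact B) (hx : x ∉ B) :
    ∃ U ∈ π.V x, ∃ V : Set X, B ⊆ π.inh V ∧ U ∩ V = ∅ := by
  set C : Set (Set X) := {W | ∃ U ∈ π.V x, U ∩ W = ∅} with hC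
  have hcov : π.IsCover C B := by
    intro y hy
    obtain ⟨U, hU, W, hW, hUW⟩ := hH x y (fun h => hx (h ▸ hy))
    exact ⟨W, ⟨U, hU, hUW⟩, hW⟩
  obtain ⟨D, hDC, hBD⟩ := hB C hcov
  choose! u hu huW using fun W (h : W ∈ C) => h
  refine ⟨⋂ W ∈ D, u W, ?_, ⋃ W ∈ D, W, hBD, ?_⟩
  · exact (Filter.biInter_finset_mem D).mpr fun W hW => hu W (hDC hW)
  · ext z
    simp only [Set.mem_inter_iff, Set.mem_iInter, Set.mem_iUnion, Set.mem_empty_iff_false,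
      iff_false, not_and]
    rintro hz ⟨W, hW, hzW⟩
    have : z ∈ u W ∩ W := ⟨hz W hW, hzW⟩
    rw [huW W (hDC hW)] at this
    exact this

/-- In a Hausdorff pretopological space, disjoint cover-compact sets have disjoint
vicinities. -/
theorem coverCompact_separation {X : Type*} (π : Pretop X) (hH : π.HausdorffPre)
    {A B : Set X} (hA : π.CoverCompact A) (hB : π.CoverCompact B)
    (hAB : A ∩ B = ∅) :
    ∃ U V : Set X, A ⊆ π.inh U ∧ B ⊆ π.inh V ∧ U ∩ V = ∅ := by
  set C : Set (Set X) := {U | ∃ V : Set X, B ⊆ π.inh V ∧ U ∩ V = ∅} with hC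
  have hcov : π.IsCover C A := by
    intro x hx
    have hxB : x ∉ B := fun h => by
      have : x ∈ A ∩ B := ⟨hx, h⟩; rw [hAB] at this; exact this
    obtain ⟨U, hU, V, hV, hUV⟩ := point_sep π hH hB hxB
    exact ⟨U, ⟨V, hV, hUV⟩, hU⟩
  obtain ⟨D, hDC, hAD⟩ := hA C hcov
  choose! v hv hvU using fun U (h : U ∈ C) => h
  refine ⟨⋃ U ∈ D, U, ⋂ U ∈ D, v U, hAD, ?_, ?_⟩
  · exact ((Filter.biInter_finset_mem D).mpr fun U hU => (mem_VSet (π := π)).mpr (hv U (hDC hU)) :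
      (⋂ U ∈ D, v U) ∈ VSet π B)
  · ext z
    simp only [Set.mem_inter_iff, Set.mem_iInter, Set.mem_iUnion, Set.mem_empty_iff_false,
      iff_false, not_and]
    rintro ⟨U, hU, hzU⟩ hz
    have : z ∈ U ∩ v U := ⟨hzU, hz U hU⟩
    rw [hvU U (hDC hU)] at this
    exact this
end

section
/- Let (X, π) be a compact Hausdorff pretopological space, f : X → Y a surjection onto a set Y such that f⁻(y) is cover-compact for each y ∈ Y, and let σ be the θ-quotient convergence on Y (F →_σ y iff f⁻(F) is compact at f⁻(y)). Then for any filter F on Y, F →_σ y if and only if f⁻(F) ⊇ V_π(f⁻(y)), where V_π(f⁻(y)) is the filter of vicinities of f⁻(y). -/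
open Set Filter

/-- For the θ-quotient convergence: `F →_σ y` (i.e. `f⁻(F)` is compact at `f⁻(y)`)
iff `f⁻(F)` contains every vicinity of the fiber `f⁻(y)`. -/
theorem thetaQuot_conv_iff {X Y : Type*} (π : Pretop X) (f : X → Y)
    (hc : π.IsCompactPre) (hH : π.HausdorffPre) (hs : Function.Surjective f)
    (hfib : ∀ y : Y, π.CoverCompact (f ⁻¹' {y}))
    (F : Filter Y) (y : Y) :
    π.CompactAt (F.comap f) (f ⁻¹' {y}) ↔
      ∀ V : Set X, f ⁻¹' {y} ⊆ π.inh V → V ∈ F.comap f := by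
  constructor
  · intro hca V hV
    by_contra hVF
    have hmeets : Meets (𝓟 Vᶜ) (F.comap f) := by
      intro A hA B hB
      obtain ⟨B₀, hB₀, hsub⟩ := Filter.mem_comap.mp hB
      have : ¬ (f ⁻¹' B₀ ⊆ V) := fun h => hVF (Filter.mem_comap.mpr ⟨B₀, hB₀, h⟩)
      obtain ⟨z, hzB, hzV⟩ := Set.not_subset.mp this
      exact ⟨z, Filter.mem_principal.mp hA hzV, hsub hzB⟩
    obtain ⟨x, hxadh, hxfib⟩ := hca (𝓟 Vᶜ) hmeets
    have hxinh : x ∈ π.inh V := hV hxfib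
    have hxadhS : x ∈ π.adhS Vᶜ := fun U hU =>
      hxadh U hU Vᶜ (Filter.mem_principal_self _)
    exact hxinh hxadhS
  · intro h G hG
    by_contra hne
    rw [Set.not_nonempty_iff_eq_empty] at hne
    -- every point of the fiber fails to be adherent to G
    have hpt : ∀ x ∈ f ⁻¹' {y}, ∃ U ∈ π.V x, ∃ B ∈ G, U ∩ B = ∅ := by
      intro x hx
      have hxn : x ∉ π.adh G := fun hmem =>
        Set.eq_empty_iff_forall_notMem.mp hne x ⟨hmem, hx⟩
      simp only [Pretop.adh, Set.mem_setOf_eq, Meets, not_forall] at hxn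
      obtain ⟨U, hU, B, hB, hUB⟩ := hxn
      exact ⟨U, hU, B, hB, Set.not_nonempty_iff_eq_empty.mp hUB⟩
    set C : Set (Set X) := {U | ∃ B ∈ G, U ∩ B = ∅} with hC
    have hcover : π.IsCover C (f ⁻¹' {y}) := by
      intro x hx
      obtain ⟨U, hU, B, hB, hUB⟩ := hpt x hx
      exact ⟨U, ⟨B, hB, hUB⟩, hU⟩
    obtain ⟨D, hDC, hDinh⟩ := hfib y C hcover
    have hunion : (⋃ U ∈ D, U) ∈ F.comap f := h _ hDinh
    -- pick B_U for each U ∈ D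
    choose B hBmem hBdisj using fun (U : Set X) (hU : U ∈ C) => hU
    have hbig : (⋂ U ∈ D, ⋂ (hU : (U : Set X) ∈ C), B U hU) ∈ G := by
      apply (Filter.biInter_mem D.finite_toSet).mpr
      intro U hU
      exact Filter.iInter_mem.mpr fun hUC => hBmem U hUC
    obtain ⟨z, hz1, hz2⟩ := hG _ hbig _ hunion
    obtain ⟨U, hUD, hzU⟩ := Set.mem_iUnion₂.mp hz2
    have hUC : U ∈ C := hDC hUD
    have hzB : z ∈ B U hUC := by
      have := Set.mem_iInter₂.mp hz1 U hUD
      exact Set.mem_iInter.mp this hUC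
    exact Set.eq_empty_iff_forall_notMem.mp (hBdisj U hUC) z ⟨hzU, hzB⟩
end

section
/- Let (X, π) be a compact Hausdorff pretopological space, f : X → Y a surjection with each fiber f⁻(y) cover-compact, and σ the θ-quotient convergence on Y. Then (Y, σ) is a Hausdorff pretopological space whose vicinity filter at y is generated by {f^#[W] : W a vicinity of f⁻(y)}, where f^#[A] = {y ∈ Y : f⁻(y) ⊆ A}. -/
open Set Filter

section Aux

variable {X Y : Type*} (π : Pretop X)

lemma Pretop.inh_biInter_finset (D : Finset (Set X)) :
    π.inh (⋂ U ∈ D, U) = ⋂ U ∈ D, π.inh U := by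
  classical
  induction D using Finset.induction with
  | empty => simp [π.inh_univ]
  | insert _ _ hnot ih =>
    simp only [Finset.set_biInter_insert, π.inh_inter, ih]

lemma fsharp_mono {f : X → Y} {A B : Set X} (h : A ⊆ B) :
    fsharp f A ⊆ fsharp f B := fun _ hy => hy.trans h

lemma mem_thetaQuot {f : X → Y} {y : Y} {A : Set Y} :
    A ∈ (thetaQuot π f).V y ↔ ∃ W, f ⁻¹' {y} ⊆ π.inh W ∧ fsharp f W ⊆ A := by
  constructor
  · intro h
    rcases (mem_lift'_sets (fun _ _ h => fsharp_mono h)).mp h with ⟨W, hW, hsub⟩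
    exact ⟨W, mem_VSet.mp hW, hsub⟩
  · rintro ⟨W, hW, hsub⟩
    exact mem_of_superset (Filter.mem_lift' (mem_VSet.mpr hW)) hsub

/-- Separate a point from a cover-compact set. -/
lemma sep_point_set (hH : π.HausdorffPre) {B : Set X} (hB : π.CoverCompact B)
    {x : X} (hx : x ∉ B) :
    ∃ U ∈ π.V x, ∃ W : Set X, B ⊆ π.inh W ∧ U ∩ W = ∅ := by
  classical
  set C : Set (Set X) := {W | ∃ U ∈ π.V x, U ∩ W = ∅} with hC
  have hcover : π.IsCover C B := by
    intro b hb
    rcases hH x b (fun h => hx (h ▸ hb)) with ⟨U, hU, W, hW, hUW⟩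
    exact ⟨W, ⟨U, hU, hUW⟩, hW⟩
  rcases hB C hcover with ⟨D, hDC, hDinh⟩
  choose u hu hud using fun (W : Set X) (h : W ∈ C) => h
  set u' : Set X → Set X := fun W => if h : W ∈ C then u W h else univ with hu'
  refine ⟨⋂ W ∈ D, u' W, ?_, ⋃ W ∈ D, W, hDinh, ?_⟩
  · refine (Filter.biInter_finset_mem D).mpr fun W hW => ?_
    rw [hu']
    simp only [dif_pos (hDC hW)]
    exact hu W (hDC hW)
  · ext z
    simp only [Set.mem_inter_iff, Set.mem_iInter, Set.mem_iUnion, Set.mem_empty_iff_false,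
      iff_false, not_and]
    rintro h1 ⟨W, hWD, hzW⟩
    have hWC : W ∈ C := hDC hWD
    have hz : z ∈ u' W := h1 W hWD
    rw [hu'] at hz
    simp only [dif_pos hWC] at hz
    have : z ∈ u W hWC ∩ W := ⟨hz, hzW⟩
    rw [hud W hWC] at this
    exact this

/-- Separate two disjoint cover-compact sets. -/
lemma sep_set_set (hH : π.HausdorffPre) {A B : Set X}
    (hA : π.CoverCompact A) (hB : π.CoverCompact B) (hd : A ∩ B = ∅) :
    ∃ U W : Set X, A ⊆ π.inh U ∧ B ⊆ π.inh W ∧ U ∩ W = ∅ := by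
  classical
  set C : Set (Set X) := {U | ∃ W : Set X, B ⊆ π.inh W ∧ U ∩ W = ∅} with hC
  have hcover : π.IsCover C A := by
    intro x hx
    have hxB : x ∉ B := fun h => by
      have : x ∈ A ∩ B := ⟨hx, h⟩
      rw [hd] at this; exact this
    rcases sep_point_set π hH hB hxB with ⟨U, hU, W, hW, hUW⟩
    exact ⟨U, ⟨W, hW, hUW⟩, hU⟩
  rcases hA C hcover with ⟨D, hDC, hDinh⟩
  choose w hw hwd using fun (U : Set X) (h : U ∈ C) => h
  set w' : Set X → Set X := fun U => if h : U ∈ C then w U h else univ with hw'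
  refine ⟨⋃ U ∈ D, U, ⋂ U ∈ D, w' U, hDinh, ?_, ?_⟩
  · -- B ⊆ inh of the finite intersection
    have heq : (⋂ U ∈ D, w' U) = ⋂ V ∈ D.image w', V := by
      simp only [Finset.set_biInter_finset_image]
    rw [heq, π.inh_biInter_finset]
    refine Set.subset_iInter₂ fun V hV => ?_
    simp only [Finset.mem_image] at hV
    rcases hV with ⟨U, hU, rfl⟩
    rw [hw']
    simp only [dif_pos (hDC hU)]
    exact hw U (hDC hU)
  · ext z
    simp only [Set.mem_inter_iff, Set.mem_iUnion, Set.mem_iInter, Set.mem_empty_iff_false,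
      iff_false, not_and]
    rintro ⟨U, hUD, hzU⟩ h2
    have hUC : U ∈ C := hDC hUD
    have hz : z ∈ w' U := h2 U hUD
    rw [hw'] at hz
    simp only [dif_pos hUC] at hz
    have : z ∈ U ∩ w U hUC := ⟨hzU, hz⟩
    rw [hwd U hUC] at this
    exact this

end Aux

/-- The θ-quotient convergence `σ` is a Hausdorff pretopology whose vicinity filter at
`y` is generated by `{f^#[W] : W a vicinity of f⁻¹(y)}` (which is exactly the
pretopology `thetaQuot π f`). -/
theorem thetaQuot_is_hausdorff_pretopology {X Y : Type*} (π : Pretop X) (f : X → Y)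
    (hc : π.IsCompactPre) (hH : π.HausdorffPre) (hs : Function.Surjective f)
    (hfib : ∀ y : Y, π.CoverCompact (f ⁻¹' {y})) :
    (∀ (F : Filter Y) (y : Y),
      π.CompactAt (F.comap f) (f ⁻¹' {y}) ↔ (thetaQuot π f).Conv F y) ∧
    (thetaQuot π f).HausdorffPre := by
  classical
  constructor
  · intro F y
    constructor
    · -- CompactAt → Conv
      intro h
      refine le_lift'.mpr fun W hW => ?_
      rw [mem_VSet] at hW
      by_contra hWF
      -- the filter G = comap f F ⊓ 𝓟 Wᶜ is proper and meets comap f F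
      have hne : ∀ S ∈ F.comap f, (S ∩ Wᶜ).Nonempty := by
        intro S hS
        rcases hS with ⟨B, hB, hBS⟩
        rcases Set.eq_empty_or_nonempty (f ⁻¹' B ∩ Wᶜ) with he | hne
        · exfalso
          have hsub : f ⁻¹' B ⊆ W := by
            intro z hz
            by_contra hzW
            have : z ∈ f ⁻¹' B ∩ Wᶜ := ⟨hz, hzW⟩
            rw [he] at this
            exact this
          refine hWF (mem_of_superset hB fun b hb => ?_)
          intro z hz
          have hzB : z ∈ f ⁻¹' B := by
            simp only [Set.mem_preimage]
            have : f z = b := hz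
            rw [this]
            exact hb
          exact hsub hzB
        · exact hne.mono (Set.inter_subset_inter_left _ hBS)
      set G : Filter X := F.comap f ⊓ 𝓟 Wᶜ with hG
      have hGne : G.NeBot := by
        rw [hG, inf_principal_neBot_iff]
        exact hne
      have hmeets : Meets G (F.comap f) := by
        intro A hA S hS
        have : A ∩ S ∈ G := inter_mem hA (mem_inf_of_left hS)
        exact hGne.nonempty_of_mem this
      rcases h G hmeets with ⟨x, hxadh, hxfib⟩
      have hxW : x ∈ π.inh W := hW hxfib
      have hWc : Wᶜ ∈ G := mem_inf_of_right (mem_principal_self _)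
      simp only [Pretop.inh, Set.mem_compl_iff, Pretop.adhS, mem_setOf_eq,
        not_forall] at hxW
      rcases hxW with ⟨U, hU, hUW⟩
      exact hUW (hxadh U hU Wᶜ hWc)
    · -- Conv → CompactAt
      intro h G hmeets
      by_contra hempty
      rw [Set.not_nonempty_iff_eq_empty] at hempty
      -- each point of the fiber is separated from G
      set C : Set (Set X) := {U | ∃ B ∈ G, U ∩ B = ∅} with hC
      have hcover : π.IsCover C (f ⁻¹' {y}) := by
        intro x hx
        have hxna : ¬ Meets (π.V x) G := by
          intro hm
          have : x ∈ π.adh G ∩ f ⁻¹' {y} := ⟨hm, hx⟩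
          rw [hempty] at this; exact this
        simp only [Meets, not_forall] at hxna
        rcases hxna with ⟨U, hU, B, hB, hUB⟩
        exact ⟨U, ⟨B, hB, Set.not_nonempty_iff_eq_empty.mp hUB⟩, hU⟩
      rcases hfib y C hcover with ⟨D, hDC, hDinh⟩
      -- W = ⋃ D is a vicinity of the fiber, so f^#[W] ∈ F
      have hWF : fsharp f (⋃ U ∈ D, U) ∈ F :=
        h (Filter.mem_lift' (mem_VSet.mpr hDinh))
      have hWc : f ⁻¹' (fsharp f (⋃ U ∈ D, U)) ∈ F.comap f := preimage_mem_comap hWF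
      choose b hb hbd using fun (U : Set X) (hU : U ∈ C) => hU
      set b' : Set X → Set X := fun U => if h : U ∈ C then b U h else univ with hb'
      have hBG : (⋂ U ∈ D, b' U) ∈ G := by
        refine (Filter.biInter_finset_mem D).mpr fun U hU => ?_
        rw [hb']
        simp only [dif_pos (hDC hU)]
        exact hb U (hDC hU)
      rcases hmeets _ hBG _ hWc with ⟨z, hz1, hz2⟩
      have hzW : f z ∈ fsharp f (⋃ U ∈ D, U) := hz2
      have : z ∈ ⋃ U ∈ D, U := hzW rfl
      rcases Set.mem_iUnion₂.mp this with ⟨U, hUD, hzU⟩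
      have hUC : U ∈ C := hDC hUD
      simp only [Set.mem_iInter] at hz1
      have hz : z ∈ b' U := hz1 U hUD
      rw [hb'] at hz
      simp only [dif_pos hUC] at hz
      have : z ∈ U ∩ b U hUC := ⟨hzU, hz⟩
      rw [hbd U hUC] at this
      exact this
  · -- Hausdorff
    intro y₁ y₂ hne
    have hd : f ⁻¹' {y₁} ∩ f ⁻¹' {y₂} = ∅ := by
      ext x
      simp only [Set.mem_inter_iff, Set.mem_preimage, Set.mem_singleton_iff,
        Set.mem_empty_iff_false, iff_false, not_and]
      rintro rfl h
      exact hne h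
    rcases sep_set_set π hH (hfib y₁) (hfib y₂) hd with ⟨U, W, hU, hW, hUW⟩
    refine ⟨fsharp f U, Filter.mem_lift' (mem_VSet.mpr hU),
      fsharp f W, Filter.mem_lift' (mem_VSet.mpr hW), ?_⟩
    ext y
    simp only [Set.mem_inter_iff, Set.mem_empty_iff_false, iff_false, not_and]
    intro hyU hyW
    rcases hs y with ⟨x, rfl⟩
    have hx : x ∈ f ⁻¹' {f x} := rfl
    have : x ∈ U ∩ W := ⟨hyU hx, hyW hx⟩
    rw [hUW] at this
    exact this
end

section
/- Let (X, π) be a Hausdorff pretopological space and Y a compactification of X (a compact Hausdorff pretopological extension with adh_Y X = Y). Then Y⁺ is PHC: the partial regularization r(Y⁺) is compact. -/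
open Set Filter

/-- If `Y` is a compactification of a Hausdorff pretopological space `X` (here `X` is a
dense subset `S` of the compact Hausdorff pretopological space `Y`), then the simple
extension `Y⁺` is PHC: its partial regularization is compact. -/
theorem extPlus_phc {X : Type*} (ρ : Pretop X) (S : Set X)
    (hdense : ρ.adhS S = Set.univ)
    (hc : ρ.IsCompactPre) (hH : ρ.HausdorffPre) :
    ((extPlus ρ S).rpre).IsCompactPre := by
  classical
  intro F hF
  set τ := extPlus ρ S with hτ
  -- the filter G: A ∈ G iff A is a vicinity of F-many points
  let G : Filter X :=
    { sets := {A | {b | A ∈ ρ.V b} ∈ F}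
      univ_sets := by
        have : {b : X | (univ : Set X) ∈ ρ.V b} = univ := by
          ext b; simp [univ_mem]
        simp only [Set.mem_setOf_eq, this]; exact univ_mem
      sets_of_superset := by
        intro A A' hA hAA'
        exact mem_of_superset hA (fun b hb => mem_of_superset hb hAA')
      inter_sets := by
        intro A A' hA hA'
        filter_upwards [hA, hA'] with b h1 h2
        exact inter_mem h1 h2 }
  have hmemG : ∀ A : Set X, A ∈ G ↔ {b | A ∈ ρ.V b} ∈ F := fun A => Iff.rfl
  have hGS : ∀ A ∈ G, (A ∩ S).Nonempty := by
    intro A hA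
    obtain ⟨b, hb⟩ := hF.nonempty_of_mem ((hmemG A).mp hA)
    have hbd : b ∈ ρ.adhS S := by rw [hdense]; trivial
    exact hbd A hb
  have hGne : (G ⊓ 𝓟 S).NeBot := Filter.inf_principal_neBot_iff.mpr hGS
  obtain ⟨p, hp⟩ := hc (G ⊓ 𝓟 S) hGne
  refine ⟨p, ?_⟩
  intro A hA B hB
  rw [Pretop.mem_rpre] at hA
  obtain ⟨U, hU, hUA⟩ := hA
  obtain ⟨W, hW, hWU⟩ := (Filter.mem_lift'_sets
    (fun _ _ h => insert_subset_insert (inter_subset_inter_left S h))).mp hU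
  by_contra hcon
  rw [Set.not_nonempty_iff_eq_empty] at hcon
  have hsubA : τ.adhS (insert p (W ∩ S)) ⊆ A :=
    (τ.adhS_mono hWU).trans hUA
  have key : ∀ b ∈ B, ∃ Wb ∈ ρ.V b, (Wb ∩ S) ∩ (W ∩ S) = ∅ := by
    intro b hb
    have hbn : b ∉ τ.adhS (insert p (W ∩ S)) := by
      intro hmem
      have : b ∈ A ∩ B := ⟨hsubA hmem, hb⟩
      rw [hcon] at this
      exact this
    simp only [Pretop.adhS, Set.mem_setOf_eq, not_forall] at hbn
    obtain ⟨U', hU', hU'e⟩ := hbn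
    obtain ⟨Wb, hWb, hWbU'⟩ := (Filter.mem_lift'_sets
      (fun _ _ h => insert_subset_insert (inter_subset_inter_left S h))).mp hU'
    refine ⟨Wb, hWb, ?_⟩
    rw [Set.not_nonempty_iff_eq_empty] at hU'e
    apply Set.eq_empty_of_subset_empty
    rw [← hU'e]
    intro x hx
    exact ⟨hWbU' (Set.mem_insert_of_mem b hx.1), Set.mem_insert_of_mem p hx.2⟩
  choose! Wb hWb hdisj using key
  have hA' : (⋃ b ∈ B, Wb b) ∈ G := by
    rw [hmemG]
    refine mem_of_superset hB (fun b hb => ?_)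
    exact mem_of_superset (hWb b hb) (Set.subset_biUnion_of_mem hb)
  have hAS : ((⋃ b ∈ B, Wb b) ∩ S) ∈ G ⊓ 𝓟 S :=
    inter_mem (mem_inf_of_left hA') (mem_inf_of_right (mem_principal_self S))
  obtain ⟨s, hsW, hs2⟩ := hp W hW _ hAS
  obtain ⟨hsU, hsS⟩ := hs2
  simp only [Set.mem_iUnion] at hsU
  obtain ⟨b, hb, hsb⟩ := hsU
  have : s ∈ (Wb b ∩ S) ∩ (W ∩ S) := ⟨⟨hsb, hsS⟩, ⟨hsW, hsS⟩⟩
  rw [hdisj b hb] at this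
  exact this
end

section
/- In Urysohn's example X = (ℕ × ℤ) ∪ {+∞, −∞} with the topology where basic neighborhoods of (n, m) for m ≠ 0 are singletons, basic neighborhoods of (n,0) are {(n,0)} ∪ {(n, ±m) : m > k}, and basic neighborhoods of +∞ (resp. −∞) are {±∞} ∪ {(n,m) : n > k, m > 0} (resp. m < 0): the set A = {(n, 0) : n ∈ ℕ} ∪ {+∞} is an H-set in X, but A with the subspace topology is homeomorphic to ℕ with the discrete topology and hence not H-closed. -/
/-- The underlying set of Urysohn's example: `ℕ × ℤ` together with `+∞` and `-∞`. -/
inductive Ury where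
  | pt : ℕ → ℤ → Ury
  | pinf : Ury
  | ninf : Ury

namespace Ury

/-- Open sets in Urysohn's example. -/
def uryOpen (U : Set Ury) : Prop :=
  (pinf ∈ U → ∃ k : ℕ, ∀ n > k, ∀ m : ℤ, 0 < m → pt n m ∈ U) ∧
  (ninf ∈ U → ∃ k : ℕ, ∀ n > k, ∀ m : ℤ, m < 0 → pt n m ∈ U) ∧
  (∀ n : ℕ, pt n 0 ∈ U → ∃ k : ℕ, ∀ m : ℤ, (k : ℤ) < |m| → pt n m ∈ U)

instance : TopologicalSpace Ury where
  IsOpen := uryOpen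
  isOpen_univ := ⟨fun _ => ⟨0, fun _ _ _ _ => trivial⟩, fun _ => ⟨0, fun _ _ _ _ => trivial⟩,
    fun _ _ => ⟨0, fun _ _ => trivial⟩⟩
  isOpen_inter := by
    rintro U V ⟨hU1, hU2, hU3⟩ ⟨hV1, hV2, hV3⟩
    refine ⟨?_, ?_, ?_⟩
    · rintro ⟨h1, h2⟩
      obtain ⟨k1, hk1⟩ := hU1 h1
      obtain ⟨k2, hk2⟩ := hV1 h2
      exact ⟨max k1 k2, fun n hn m hm =>
        ⟨hk1 n (lt_of_le_of_lt (le_max_left _ _) hn) m hm,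
         hk2 n (lt_of_le_of_lt (le_max_right _ _) hn) m hm⟩⟩
    · rintro ⟨h1, h2⟩
      obtain ⟨k1, hk1⟩ := hU2 h1
      obtain ⟨k2, hk2⟩ := hV2 h2
      exact ⟨max k1 k2, fun n hn m hm =>
        ⟨hk1 n (lt_of_le_of_lt (le_max_left _ _) hn) m hm,
         hk2 n (lt_of_le_of_lt (le_max_right _ _) hn) m hm⟩⟩
    · rintro n ⟨h1, h2⟩
      obtain ⟨k1, hk1⟩ := hU3 n h1
      obtain ⟨k2, hk2⟩ := hV3 n h2
      refine ⟨max k1 k2, fun m hm => ?_⟩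
      push_cast at hm
      exact ⟨hk1 m (lt_of_le_of_lt (by exact_mod_cast le_max_left k1 k2) hm),
             hk2 m (lt_of_le_of_lt (by exact_mod_cast le_max_right k1 k2) hm)⟩
  isOpen_sUnion := by
    intro S hS
    refine ⟨?_, ?_, ?_⟩
    · rintro ⟨t, ht, hmem⟩
      obtain ⟨k, hk⟩ := (hS t ht).1 hmem
      exact ⟨k, fun n hn m hm => ⟨t, ht, hk n hn m hm⟩⟩
    · rintro ⟨t, ht, hmem⟩
      obtain ⟨k, hk⟩ := (hS t ht).2.1 hmem
      exact ⟨k, fun n hn m hm => ⟨t, ht, hk n hn m hm⟩⟩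
    · rintro n ⟨t, ht, hmem⟩
      obtain ⟨k, hk⟩ := (hS t ht).2.2 n hmem
      exact ⟨k, fun m hm => ⟨t, ht, hk m hm⟩⟩

/-- The H-set `A = {(n,0) : n ∈ ℕ} ∪ {+∞}`. -/
def A : Set Ury := {x | (∃ n : ℕ, x = pt n 0) ∨ x = pinf}

/-- `B = {(n,m) : m > 0}`. -/
def B : Set Ury := {x | ∃ n : ℕ, ∃ m : ℤ, 0 < m ∧ x = pt n m}

/-- The column through `(n,0)` is open. -/
lemma isOpen_col (n : ℕ) : IsOpen {x : Ury | ∃ m : ℤ, x = pt n m} := by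
  refine ⟨fun h => ?_, fun h => ?_, fun n' h => ?_⟩
  · obtain ⟨m, hm⟩ := h; cases hm
  · obtain ⟨m, hm⟩ := h; cases hm
  · obtain ⟨m, hm⟩ := h
    obtain ⟨h1, h2⟩ := Ury.pt.inj hm
    exact ⟨0, fun m' _ => ⟨m', by rw [h1]⟩⟩

lemma isOpen_pinfB : IsOpen (insert pinf B) := by
  refine ⟨fun _ => ?_, fun h => ?_, fun n h => ?_⟩
  · exact ⟨0, fun n _ m hm => Or.inr ⟨n, m, hm, rfl⟩⟩
  · rcases h with h | ⟨n, m, hm, h⟩ <;> cases h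
  · rcases h with h | ⟨n', m, hm, h⟩
    · cases h
    · obtain ⟨_, h2⟩ := Ury.pt.inj h; omega

instance : DiscreteTopology ↥A := by
  rw [discreteTopology_iff_isOpen_singleton]
  rintro ⟨x, hx⟩
  rcases hx with ⟨n, rfl⟩ | rfl
  · refine ⟨{x | ∃ m : ℤ, x = pt n m}, isOpen_col n, ?_⟩
    ext ⟨y, hy⟩
    simp only [Set.mem_preimage, Set.mem_setOf_eq, Set.mem_singleton_iff, Subtype.ext_iff]
    constructor
    · rintro ⟨m, rfl⟩
      rcases hy with ⟨n', h⟩ | h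
      · obtain ⟨h1, h2⟩ := Ury.pt.inj h; rw [h1, h2]
      · cases h
    · rintro rfl; exact ⟨0, rfl⟩
  · refine ⟨insert pinf B, isOpen_pinfB, ?_⟩
    ext ⟨y, hy⟩
    simp only [Set.mem_preimage, Set.mem_insert_iff, Set.mem_singleton_iff, Subtype.ext_iff]
    constructor
    · rintro (rfl | ⟨n, m, hm, rfl⟩)
      · rfl
      · rcases hy with ⟨n', h⟩ | h
        · obtain ⟨_, h2⟩ := Ury.pt.inj h; omega
        · cases h
    · rintro rfl; exact Or.inl rfl

/-- The explicit bijection `ℕ ≃ A`. -/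
def natEquivA : ℕ ≃ ↥A where
  toFun n := match n with
    | 0 => ⟨pinf, Or.inr rfl⟩
    | k+1 => ⟨pt k 0, Or.inl ⟨k, rfl⟩⟩
  invFun x := match x with
    | ⟨pt k _, _⟩ => k+1
    | ⟨pinf, _⟩ => 0
    | ⟨ninf, _⟩ => 0
  left_inv n := by cases n <;> rfl
  right_inv x := by
    obtain ⟨x, hx⟩ := x
    rcases hx with ⟨n, rfl⟩ | rfl <;> rfl

end Ury

open Ury in
/-- In Urysohn's example, `A = {(n,0)} ∪ {+∞}` is an H-set in `X`, `A` with the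
subspace topology is homeomorphic to discrete `ℕ`, and `A` is not H-closed. -/
theorem ury_A_hSet_not_hClosed :
    (∀ C : Set (Set Ury), (∀ U ∈ C, IsOpen U) → Ury.A ⊆ ⋃₀ C →
      ∃ D : Finset (Set Ury), ↑D ⊆ C ∧ Ury.A ⊆ ⋃ U ∈ D, closure U) ∧
    Nonempty (ℕ ≃ₜ Ury.A) ∧
    ¬ (∀ C : Set (Set Ury.A), (∀ U ∈ C, IsOpen U) → ⋃₀ C = Set.univ →
      ∃ D : Finset (Set Ury.A), ↑D ⊆ C ∧ (⋃ U ∈ D, closure U) = Set.univ) := by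
  refine ⟨?_, ⟨⟨natEquivA, continuous_of_discreteTopology, continuous_of_discreteTopology⟩⟩, ?_⟩
  · classical
    intro C hC hcov
    obtain ⟨U, hUC, hpU⟩ := hcov (Or.inr rfl : pinf ∈ A)
    obtain ⟨k, hk⟩ := (hC U hUC).1 hpU
    have hf : ∀ n : ℕ, ∃ V ∈ C, pt n 0 ∈ V := fun n => hcov (Or.inl ⟨n, rfl⟩)
    choose f hfC hfm using hf
    refine ⟨insert U ((Finset.range (k+1)).image f), ?_, ?_⟩
    · intro V hV
      simp only [Finset.coe_insert, Set.mem_insert_iff, Finset.coe_image,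
        Set.mem_image, Finset.mem_coe, Finset.mem_range] at hV
      rcases hV with rfl | ⟨n, _, rfl⟩
      · exact hUC
      · exact hfC n
    · rintro x (⟨n, rfl⟩ | rfl)
      · by_cases hn : n ≤ k
        · refine Set.mem_iUnion₂.2 ⟨f n, ?_, subset_closure (hfm n)⟩
          exact Finset.mem_insert_of_mem (Finset.mem_image.2 ⟨n, Finset.mem_range.2 (by omega), rfl⟩)
        · refine Set.mem_iUnion₂.2 ⟨U, Finset.mem_insert_self _ _, ?_⟩
          rw [mem_closure_iff]
          intro V hV hxV
          obtain ⟨k', hk'⟩ := hV.2.2 n hxV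
          have habs : ((k' : ℤ)) < |(k' : ℤ) + 1| := by
            rw [abs_of_pos (by positivity)]; omega
          exact ⟨pt n ((k' : ℤ) + 1), hk' _ habs, hk n (by omega) _ (by positivity)⟩
      · exact Set.mem_iUnion₂.2 ⟨U, Finset.mem_insert_self _ _, subset_closure hpU⟩
  · intro h
    have : Infinite ↥A := Infinite.of_injective (⇑natEquivA) natEquivA.injective
    obtain ⟨D, hDC, hcover⟩ := h (Set.range (fun a : ↥A => {a}))
      (by rintro _ ⟨a, rfl⟩; exact isOpen_discrete _)
      (by ext a; simp only [Set.mem_sUnion, Set.mem_range, Set.mem_univ, iff_true]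
          exact ⟨{a}, ⟨a, rfl⟩, rfl⟩)
    have hfin : (⋃ U ∈ D, closure U).Finite := by
      refine Set.Finite.biUnion D.finite_toSet (fun U hU => ?_)
      obtain ⟨a, rfl⟩ := hDC hU
      rw [(isClosed_discrete _).closure_eq]
      exact Set.finite_singleton a
    rw [hcover] at hfin
    exact Set.infinite_univ hfin
end
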